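/- arXiv:math/0204105 — 2 statements merged into one kernel-verified Lean document; each statement's English description precedes it below -/
import Mathlib

section
/- Let γ ≠ 0, r, φ ∈ ℝ with r² + γ² = 1, and define the curve c(t) = (x(t), y(t), z(t)) by x(t) = (r/2γ)(sin(2γt+φ) - sin φ), y(t) = (r/2γ)(cos φ - cos(2γt+φ)), z(t) = ((1+γ²)/(2γ)) t - ((1-γ²)/(4γ²)) sin(2γt). Then c(0) = (0,0,0), and the derivatives satisfy x'(t) = α(t), y'(t) = β(t), z'(t) = γ - α(t) y(t) + β(t) x(t), where α(t) = r cos(2γt+φ), β(t) = r sin(2γt+φ). -/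
/-- The explicit Heisenberg geodesic through 0 with γ ≠ 0 satisfies c(0) = 0 and the
    first-order system x' = α, y' = β, z' = γ − αy + βx. -/
theorem heis_geodesic_equations (γ r φ : ℝ) (hγ : γ ≠ 0) (hunit : r ^ 2 + γ ^ 2 = 1) :
    let x : ℝ → ℝ := fun t => r / (2 * γ) * (Real.sin (2 * γ * t + φ) - Real.sin φ)
    let y : ℝ → ℝ := fun t => r / (2 * γ) * (Real.cos φ - Real.cos (2 * γ * t + φ))
    let z : ℝ → ℝ := fun t =>
      (1 + γ ^ 2) / (2 * γ) * t - (1 - γ ^ 2) / (4 * γ ^ 2) * Real.sin (2 * γ * t)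
    let α : ℝ → ℝ := fun t => r * Real.cos (2 * γ * t + φ)
    let β : ℝ → ℝ := fun t => r * Real.sin (2 * γ * t + φ)
    x 0 = 0 ∧ y 0 = 0 ∧ z 0 = 0 ∧
    ∀ t : ℝ, deriv x t = α t ∧ deriv y t = β t ∧
      deriv z t = γ - α t * y t + β t * x t := by
  intro x y z α β
  refine ⟨by simp [x], by simp [y], by simp [z], fun t => ?_⟩
  have hu : HasDerivAt (fun t : ℝ => 2 * γ * t + φ) (2 * γ) t := by
    simpa using ((hasDerivAt_id t).const_mul (2 * γ)).add_const φ
  have hu0 : HasDerivAt (fun t : ℝ => 2 * γ * t) (2 * γ) t := by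
    simpa using (hasDerivAt_id t).const_mul (2 * γ)
  have hx : HasDerivAt x (r / (2 * γ) * (Real.cos (2 * γ * t + φ) * (2 * γ))) t := by
    simpa using ((hu.sin.sub_const (Real.sin φ)).const_mul (r / (2 * γ)))
  have hy : HasDerivAt y (r / (2 * γ) * (Real.sin (2 * γ * t + φ) * (2 * γ))) t := by
    simpa using (((hu.cos.const_sub (Real.cos φ))).const_mul (r / (2 * γ)))
  have hz : HasDerivAt z ((1 + γ ^ 2) / (2 * γ)
      - (1 - γ ^ 2) / (4 * γ ^ 2) * (Real.cos (2 * γ * t) * (2 * γ))) t := by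
    simpa [Pi.sub_def] using (((hasDerivAt_id t).const_mul ((1 + γ ^ 2) / (2 * γ))).sub
      (hu0.sin.const_mul ((1 - γ ^ 2) / (4 * γ ^ 2))))
  have key : Real.cos (2 * γ * t) =
      Real.cos (2 * γ * t + φ) * Real.cos φ + Real.sin (2 * γ * t + φ) * Real.sin φ := by
    rw [← Real.cos_sub]; ring_nf
  have hpy : Real.sin (2 * γ * t + φ) ^ 2 + Real.cos (2 * γ * t + φ) ^ 2 = 1 :=
    Real.sin_sq_add_cos_sq _
  refine ⟨?_, ?_, ?_⟩
  · rw [hx.deriv]; show _ = r * Real.cos (2 * γ * t + φ); field_simp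
  · rw [hy.deriv]; show _ = r * Real.sin (2 * γ * t + φ); field_simp
  · rw [hz.deriv]
    show _ = γ - r * Real.cos (2 * γ * t + φ) * (r / (2 * γ) * (Real.cos φ - Real.cos (2 * γ * t + φ)))
      + r * Real.sin (2 * γ * t + φ) * (r / (2 * γ) * (Real.sin (2 * γ * t + φ) - Real.sin φ))
    rw [key]
    have hr : r ^ 2 = 1 - γ ^ 2 := by linarith
    linear_combination (-(1 - (Real.cos (2 * γ * t + φ) * Real.cos φ + Real.sin (2 * γ * t + φ) * Real.sin φ)) / (2 * γ)) * hr + (-r ^ 2 / (2 * γ)) * hpy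
      + (γ - (1 - γ ^ 2) * (Real.cos (2 * γ * t + φ) * Real.cos φ + Real.sin (2 * γ * t + φ) * Real.sin φ) / 2 * γ⁻¹) * mul_inv_cancel₀ hγ
end

section
/- For the curve c(t) = ((r/2γ)(sin(2γt+φ) - sin φ), (r/2γ)(cos φ - cos(2γt+φ)), ((1+γ²)/(2γ))t - ((1-γ²)/(4γ²)) sin(2γt)) with r² + γ² = 1 and γ ≠ 0, the velocity c'(t) has unit length in the left-invariant metric, i.e., writing c'(t) = αX + βY + γ̃T in the frame X=(1,0,-y), Y=(0,1,x), T=(0,0,1) at c(t), one has α² + β² + γ̃² = 1 for all t. -/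
/-- The explicit Heisenberg geodesic has unit speed in the left-invariant metric:
    its frame coordinates α = x', β = y', γ̃ = z' + y x' − x y' satisfy
    α² + β² + γ̃² = 1. -/
theorem heis_geodesic_unit_speed (γ r φ : ℝ) (hγ : γ ≠ 0) (hunit : r ^ 2 + γ ^ 2 = 1) :
    let x : ℝ → ℝ := fun t => r / (2 * γ) * (Real.sin (2 * γ * t + φ) - Real.sin φ)
    let y : ℝ → ℝ := fun t => r / (2 * γ) * (Real.cos φ - Real.cos (2 * γ * t + φ))
    let z : ℝ → ℝ := fun t =>
      (1 + γ ^ 2) / (2 * γ) * t - (1 - γ ^ 2) / (4 * γ ^ 2) * Real.sin (2 * γ * t)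
    ∀ t : ℝ,
      (deriv x t) ^ 2 + (deriv y t) ^ 2 +
        (deriv z t + y t * deriv x t - x t * deriv y t) ^ 2 = 1 := by
  intro x y z t
  have hu : HasDerivAt (fun t : ℝ => 2 * γ * t + φ) (2 * γ) t := by
    simpa using ((hasDerivAt_id t).const_mul (2 * γ)).add_const φ
  have hv : HasDerivAt (fun t : ℝ => 2 * γ * t) (2 * γ) t := by
    simpa using (hasDerivAt_id t).const_mul (2 * γ)
  have hx : HasDerivAt x (r * Real.cos (2 * γ * t + φ)) t := by
    have := (((Real.hasDerivAt_sin _).comp t hu).sub_const (Real.sin φ)).const_mul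
      (r / (2 * γ))
    refine this.congr_deriv ?_
    field_simp
  have hy : HasDerivAt y (r * Real.sin (2 * γ * t + φ)) t := by
    have := ((((Real.hasDerivAt_cos _).comp t hu).const_sub (Real.cos φ))).const_mul
      (r / (2 * γ))
    refine this.congr_deriv ?_
    field_simp
  have hz : HasDerivAt z ((1 + γ ^ 2) / (2 * γ)
      - (1 - γ ^ 2) / (4 * γ ^ 2) * (Real.cos (2 * γ * t) * (2 * γ))) t := by
    have h1 : HasDerivAt (fun t : ℝ => (1 + γ ^ 2) / (2 * γ) * t)
        ((1 + γ ^ 2) / (2 * γ)) t := by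
      simpa using (hasDerivAt_id t).const_mul ((1 + γ ^ 2) / (2 * γ))
    exact h1.sub (((Real.hasDerivAt_sin _).comp t hv).const_mul _)
  rw [hx.deriv, hy.deriv, hz.deriv]
  have hcs := Real.sin_sq_add_cos_sq (2 * γ * t + φ)
  have key : (1 + γ ^ 2) / (2 * γ) - (1 - γ ^ 2) / (4 * γ ^ 2) * (Real.cos (2 * γ * t) * (2 * γ))
      + y t * (r * Real.cos (2 * γ * t + φ)) - x t * (r * Real.sin (2 * γ * t + φ)) = γ := by
    simp only [x, y]
    have hr2 : r ^ 2 = 1 - γ ^ 2 := by linarith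
    have hcos : Real.cos (2 * γ * t) =
        Real.cos (2 * γ * t + φ) * Real.cos φ + Real.sin (2 * γ * t + φ) * Real.sin φ := by
      have := Real.cos_sub (2 * γ * t + φ) φ
      simpa using this
    rw [hcos]
    field_simp
    linear_combination (-(4 * (1 - γ ^ 2))) * Real.sin_sq_add_cos_sq (γ * 2 * t + φ) +
      (4 * (Real.cos (γ * 2 * t + φ) * Real.cos φ + Real.sin (γ * 2 * t + φ) * Real.sin φ -
        Real.cos (γ * 2 * t + φ) ^ 2 - Real.sin (γ * 2 * t + φ) ^ 2)) * hr2
  rw [key]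
  nlinarith [hcs]
end
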